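/- Let A : [0,1] → (Hermitian N×N matrices) be a continuous path such that A₀ and A₁ are invertible. Then η(A₁) - η(A₀) = 2·SF(Aₜ), where η(B) = #{positive eigenvalues of B} - #{negative eigenvalues of B} is the signature and SF(Aₜ) denotes the spectral flow of the path, i.e. the net number of eigenvalues crossing zero. -/

import Mathlib

open Matrix Finset Module

/-- The signature `η(B)` of a Hermitian matrix: number of positive eigenvalues minus
number of negative eigenvalues (counted with multiplicity). -/
noncomputable def matrixSignature {N : ℕ} {B : Matrix (Fin N) (Fin N) ℂ}
    (hB : B.IsHermitian) : ℤ :=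
  ((univ.filter fun j => 0 < hB.eigenvalues j).card : ℤ)
    - ((univ.filter fun j => hB.eigenvalues j < 0).card : ℤ)



variable {N : ℕ} {B : Matrix (Fin N) (Fin N) ℂ}

noncomputable def coeff (hB : B.IsHermitian) (x : EuclideanSpace ℂ (Fin N)) (j : Fin N) : ℂ :=
  inner ℂ (hB.eigenvectorBasis j) x

lemma sum_coeff (hB : B.IsHermitian) (x : EuclideanSpace ℂ (Fin N)) :
    ∑ j, coeff hB x j • hB.eigenvectorBasis j = x := by
  simpa [coeff] using hB.eigenvectorBasis.sum_repr' x

lemma toEuclideanLin_eigenbasis (hB : B.IsHermitian) (j : Fin N) :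
    Matrix.toEuclideanLin B (hB.eigenvectorBasis j)
      = (hB.eigenvalues j : ℂ) • hB.eigenvectorBasis j := by
  ext i
  have := congrFun (hB.mulVec_eigenvectorBasis j) i
  simpa [Matrix.toEuclideanLin_apply] using this

lemma qform_eq (hB : B.IsHermitian) (x : EuclideanSpace ℂ (Fin N)) :
    (inner ℂ x (Matrix.toEuclideanLin B x) : ℂ)
      = ∑ j, (hB.eigenvalues j : ℂ) * Complex.normSq (coeff hB x j) := by
  have hTx : Matrix.toEuclideanLin B x
      = ∑ j, ((hB.eigenvalues j : ℂ) * coeff hB x j) • hB.eigenvectorBasis j := by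
    conv_lhs => rw [← sum_coeff hB x]
    rw [map_sum]
    congr 1; ext j
    rw [LinearMap.map_smul, toEuclideanLin_eigenbasis hB j, smul_smul, mul_comm]
  rw [hTx, inner_sum]
  congr 1; ext j
  rw [inner_smul_right]
  have : (inner ℂ x (hB.eigenvectorBasis j) : ℂ) = starRingEnd ℂ (coeff hB x j) := by
    rw [coeff, ← inner_conj_symm]
  rw [this, mul_assoc]
  congr 1
  rw [mul_comm, Complex.normSq_eq_conj_mul_self]

lemma normsq_eq (hB : B.IsHermitian) (x : EuclideanSpace ℂ (Fin N)) :
    ‖x‖ ^ 2 = ∑ j, Complex.normSq (coeff hB x j) := by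
  have h : ‖x‖ = ‖hB.eigenvectorBasis.repr x‖ := (hB.eigenvectorBasis.repr.norm_map x).symm
  rw [h, EuclideanSpace.norm_eq]
  rw [Real.sq_sqrt (by positivity)]
  congr 1; ext j
  rw [coeff, ← hB.eigenvectorBasis.repr_apply_apply, ← Complex.sq_norm]

noncomputable def qf (B : Matrix (Fin N) (Fin N) ℂ) (x : EuclideanSpace ℂ (Fin N)) : ℝ :=
  (inner ℂ x (Matrix.toEuclideanLin B x) : ℂ).re

lemma qf_eq (hB : B.IsHermitian) (x : EuclideanSpace ℂ (Fin N)) :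
    qf B x = ∑ j, hB.eigenvalues j * Complex.normSq (coeff hB x j) := by
  rw [qf, qform_eq hB x]
  rw [Complex.re_sum]
  congr 1; ext j
  simp [Complex.ofReal_mul]

-- coefficient vanishing
lemma coeff_eq_zero (hB : B.IsHermitian) (P : Fin N → Prop) [DecidablePred P]
    (x : EuclideanSpace ℂ (Fin N))
    (hx : x ∈ Submodule.span ℂ (Set.range fun j : {j // P j} => hB.eigenvectorBasis j))
    (j : Fin N) (hj : ¬ P j) : coeff hB x j = 0 := by
  have hle : Submodule.span ℂ (Set.range fun i : {i // P i} => hB.eigenvectorBasis i)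
      ≤ LinearMap.ker (innerSL ℂ (hB.eigenvectorBasis j) : _ →L[ℂ] ℂ).toLinearMap := by
    rw [Submodule.span_le]
    rintro _ ⟨i, rfl⟩
    simp only [SetLike.mem_coe, LinearMap.mem_ker, ContinuousLinearMap.coe_coe, innerSL_apply_apply]
    exact hB.eigenvectorBasis.orthonormal.2 (fun h => hj (h ▸ i.2))
  have := hle hx
  simpa [coeff] using this

lemma finrank_span_sub (hB : B.IsHermitian) (P : Fin N → Prop) [DecidablePred P] :
    finrank ℂ (Submodule.span ℂ
      (Set.range fun j : {j // P j} => hB.eigenvectorBasis j))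
      = (univ.filter fun j => P j).card := by
  have h := finrank_span_eq_card (R := ℂ) (ι := {j // P j})
    (b := fun j : {j // P j} => hB.eigenvectorBasis j)
    ((hB.eigenvectorBasis.orthonormal.linearIndependent).comp
    Subtype.val Subtype.val_injective)
  rw [h]
  simp [Fintype.card_subtype]

lemma finrank_le_card_lt (hB : B.IsHermitian) (ε : ℝ)
    (W : Submodule ℂ (EuclideanSpace ℂ (Fin N)))
    (hW : ∀ x ∈ W, x ≠ 0 → qf B x < ε * ‖x‖ ^ 2) :
    finrank ℂ W ≤ (univ.filter fun j => hB.eigenvalues j < ε).card := by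
  by_contra hlt
  push_neg at hlt
  set V := Submodule.span ℂ
    (Set.range fun j : {j // ¬ hB.eigenvalues j < ε} => hB.eigenvectorBasis j) with hVdef
  have hV : finrank ℂ V = (univ.filter fun j => ¬ hB.eigenvalues j < ε).card :=
    finrank_span_sub hB _
  have hsum : (univ.filter fun j => hB.eigenvalues j < ε).card
      + (univ.filter fun j => ¬ hB.eigenvalues j < ε).card = N := by
    rw [Finset.card_filter_add_card_filter_not]; simp
  have hdim : finrank ℂ (EuclideanSpace ℂ (Fin N)) = N := by
    simp [finrank_euclideanSpace]
  have hpos : 0 < finrank ℂ ↥(W ⊓ V) := by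
    have h2 := Submodule.finrank_sup_add_finrank_inf_eq W V
    have h3 : finrank ℂ ↥(W ⊔ V) ≤ N := by
      calc finrank ℂ ↥(W ⊔ V) ≤ finrank ℂ (EuclideanSpace ℂ (Fin N)) := Submodule.finrank_le _
      _ = N := hdim
    omega
  obtain ⟨x, hx0⟩ := Module.finrank_pos_iff_exists_ne_zero.mp hpos
  have hxW : (x : EuclideanSpace ℂ (Fin N)) ∈ W := x.2.1
  have hxV : (x : EuclideanSpace ℂ (Fin N)) ∈ V := x.2.2
  have hxne : (x : EuclideanSpace ℂ (Fin N)) ≠ 0 := fun h => hx0 (Subtype.ext h)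
  have h4 := hW _ hxW hxne
  have h5 : ε * ‖(x : EuclideanSpace ℂ (Fin N))‖ ^ 2 ≤ qf B x := by
    rw [qf_eq hB, normsq_eq hB, Finset.mul_sum]
    apply Finset.sum_le_sum
    intro j _
    by_cases hj : hB.eigenvalues j < ε
    · rw [coeff_eq_zero hB (fun j => ¬ hB.eigenvalues j < ε) _ hxV j (not_not_intro hj)]
      simp
    · exact mul_le_mul_of_nonneg_right (not_lt.mp hj) (Complex.normSq_nonneg _)
  linarith

lemma finrank_le_card_gt (hB : B.IsHermitian) (ε : ℝ)
    (W : Submodule ℂ (EuclideanSpace ℂ (Fin N)))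
    (hW : ∀ x ∈ W, x ≠ 0 → ε * ‖x‖ ^ 2 < qf B x) :
    finrank ℂ W ≤ (univ.filter fun j => ε < hB.eigenvalues j).card := by
  by_contra hlt
  push_neg at hlt
  set V := Submodule.span ℂ
    (Set.range fun j : {j // ¬ ε < hB.eigenvalues j} => hB.eigenvectorBasis j) with hVdef
  have hV : finrank ℂ V = (univ.filter fun j => ¬ ε < hB.eigenvalues j).card :=
    finrank_span_sub hB _
  have hsum : (univ.filter fun j => ε < hB.eigenvalues j).card
      + (univ.filter fun j => ¬ ε < hB.eigenvalues j).card = N := by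
    rw [Finset.card_filter_add_card_filter_not]; simp
  have hdim : finrank ℂ (EuclideanSpace ℂ (Fin N)) = N := by
    simp [finrank_euclideanSpace]
  have hpos : 0 < finrank ℂ ↥(W ⊓ V) := by
    have h2 := Submodule.finrank_sup_add_finrank_inf_eq W V
    have h3 : finrank ℂ ↥(W ⊔ V) ≤ N := by
      calc finrank ℂ ↥(W ⊔ V) ≤ finrank ℂ (EuclideanSpace ℂ (Fin N)) := Submodule.finrank_le _
      _ = N := hdim
    omega
  obtain ⟨x, hx0⟩ := Module.finrank_pos_iff_exists_ne_zero.mp hpos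
  have hxW : (x : EuclideanSpace ℂ (Fin N)) ∈ W := x.2.1
  have hxV : (x : EuclideanSpace ℂ (Fin N)) ∈ V := x.2.2
  have hxne : (x : EuclideanSpace ℂ (Fin N)) ≠ 0 := fun h => hx0 (Subtype.ext h)
  have h4 := hW _ hxW hxne
  have h5 : qf B x ≤ ε * ‖(x : EuclideanSpace ℂ (Fin N))‖ ^ 2 := by
    rw [qf_eq hB, normsq_eq hB, Finset.mul_sum]
    apply Finset.sum_le_sum
    intro j _
    by_cases hj : ε < hB.eigenvalues j
    · rw [coeff_eq_zero hB (fun j => ¬ ε < hB.eigenvalues j) _ hxV j (not_not_intro hj)]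
      simp
    · exact mul_le_mul_of_nonneg_right (not_lt.mp hj) (Complex.normSq_nonneg _)
  linarith

variable {C : Matrix (Fin N) (Fin N) ℂ}

lemma count_lt_le_of_close (hB : B.IsHermitian) (hC : C.IsHermitian) (ε δ : ℝ)
    (hδ : 0 < δ) (hBgap : ∀ j, δ ≤ |hB.eigenvalues j - ε|)
    (hclose : ∀ x : EuclideanSpace ℂ (Fin N), x ≠ 0 → |qf C x - qf B x| < δ * ‖x‖ ^ 2) :
    (univ.filter fun j => hB.eigenvalues j < ε).card
      ≤ (univ.filter fun j => hC.eigenvalues j < ε).card := by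
  set W := Submodule.span ℂ
    (Set.range fun j : {j // hB.eigenvalues j < ε} => hB.eigenvectorBasis j) with hWdef
  have hdim : finrank ℂ W = (univ.filter fun j => hB.eigenvalues j < ε).card :=
    finrank_span_sub hB _
  rw [← hdim]
  apply finrank_le_card_lt hC ε W
  intro x hxW hxne
  have hnormpos : (0:ℝ) < ‖x‖ ^ 2 := by
    have := norm_pos_iff.mpr hxne
    positivity
  have hB5 : qf B x ≤ (ε - δ) * ‖x‖ ^ 2 := by
    rw [qf_eq hB, normsq_eq hB, Finset.mul_sum]
    apply Finset.sum_le_sum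
    intro j _
    by_cases hj : hB.eigenvalues j < ε
    · have h1 : hB.eigenvalues j ≤ ε - δ := by
        have h2 := hBgap j
        have hneg : hB.eigenvalues j - ε < 0 := by linarith
        rw [abs_of_neg hneg] at h2
        linarith
      exact mul_le_mul_of_nonneg_right h1 (Complex.normSq_nonneg _)
    · rw [coeff_eq_zero hB (fun j => hB.eigenvalues j < ε) _ hxW j hj]
      simp
  have h6 := hclose x hxne
  have h7 : qf C x - qf B x < δ * ‖x‖ ^ 2 := lt_of_le_of_lt (le_abs_self _) h6
  nlinarith

lemma count_gt_le_of_close (hB : B.IsHermitian) (hC : C.IsHermitian) (ε δ : ℝ)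
    (hδ : 0 < δ) (hBgap : ∀ j, δ ≤ |hB.eigenvalues j - ε|)
    (hclose : ∀ x : EuclideanSpace ℂ (Fin N), x ≠ 0 → |qf C x - qf B x| < δ * ‖x‖ ^ 2) :
    (univ.filter fun j => ε < hB.eigenvalues j).card
      ≤ (univ.filter fun j => ε < hC.eigenvalues j).card := by
  set W := Submodule.span ℂ
    (Set.range fun j : {j // ε < hB.eigenvalues j} => hB.eigenvectorBasis j) with hWdef
  have hdim : finrank ℂ W = (univ.filter fun j => ε < hB.eigenvalues j).card :=
    finrank_span_sub hB _
  rw [← hdim]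
  apply finrank_le_card_gt hC ε W
  intro x hxW hxne
  have hnormpos : (0:ℝ) < ‖x‖ ^ 2 := by
    have := norm_pos_iff.mpr hxne
    positivity
  have hB5 : (ε + δ) * ‖x‖ ^ 2 ≤ qf B x := by
    rw [qf_eq hB, normsq_eq hB, Finset.mul_sum]
    apply Finset.sum_le_sum
    intro j _
    by_cases hj : ε < hB.eigenvalues j
    · have h1 : ε + δ ≤ hB.eigenvalues j := by
        have := hBgap j
        have hpos : 0 < hB.eigenvalues j - ε := by linarith
        rw [abs_of_pos hpos] at this
        linarith
      exact mul_le_mul_of_nonneg_right h1 (Complex.normSq_nonneg _)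
    · rw [coeff_eq_zero hB (fun j => ε < hB.eigenvalues j) _ hxW j hj]
      simp
  have h6 := hclose x hxne
  have h7 : qf B x - qf C x < δ * ‖x‖ ^ 2 := by
    rw [abs_sub_comm] at h6
    exact lt_of_le_of_lt (le_abs_self _) h6
  nlinarith

lemma coord_le_norm (x : EuclideanSpace ℂ (Fin N)) (j : Fin N) :
    ‖x j‖ ≤ ‖x‖ := by
  have h1 : ‖x j‖ ^ 2 ≤ ‖x‖ ^ 2 := by
    rw [PiLp.norm_sq_eq_of_L2 _]
    exact Finset.single_le_sum (f := fun i => ‖x i‖ ^ 2)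
      (fun i _ => by positivity) (mem_univ j)
  have := abs_le_abs (by nlinarith [norm_nonneg (x j), norm_nonneg x] : ‖x j‖ ≤ ‖x‖)
  calc ‖x j‖ = ‖x j‖ := rfl
  _ ≤ ‖x‖ := by nlinarith [norm_nonneg (x j), norm_nonneg x]

lemma euclidean_norm_le_sum (y : EuclideanSpace ℂ (Fin N)) :
    ‖y‖ ≤ ∑ i, ‖y i‖ := by
  have h0 : ∀ i, (0:ℝ) ≤ ‖y i‖ := fun i => norm_nonneg _
  have hS : (0:ℝ) ≤ ∑ i, ‖y i‖ := Finset.sum_nonneg fun i _ => h0 i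
  have h1 : ‖y‖ ^ 2 ≤ (∑ i, ‖y i‖) ^ 2 := by
    rw [PiLp.norm_sq_eq_of_L2 _]
    have : ∀ i ∈ univ, ‖y i‖ ^ 2 ≤ ‖y i‖ * ∑ k, ‖y k‖ := by
      intro i _
      have : ‖y i‖ ≤ ∑ k, ‖y k‖ :=
        Finset.single_le_sum (fun k _ => h0 k) (mem_univ i)
      have := mul_le_mul_of_nonneg_left this (h0 i)
      calc ‖y i‖ ^ 2 = ‖y i‖ * ‖y i‖ := by
            rw [sq]
      _ ≤ ‖y i‖ * ∑ k, ‖y k‖ := this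
    calc ∑ i, ‖y i‖ ^ 2 ≤ ∑ i, ‖y i‖ * ∑ k, ‖y k‖ :=
          Finset.sum_le_sum this
    _ = (∑ i, ‖y i‖) ^ 2 := by rw [← Finset.sum_mul, sq]
  nlinarith [norm_nonneg y]

lemma abs_qf_sub_le (B C : Matrix (Fin N) (Fin N) ℂ) (x : EuclideanSpace ℂ (Fin N)) :
    |qf C x - qf B x| ≤ (∑ i, ∑ j, ‖(C - B) i j‖) * ‖x‖ ^ 2 := by
  set M := C - B with hM
  have hdiff : qf C x - qf B x = (inner ℂ x (Matrix.toEuclideanLin M x) : ℂ).re := by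
    rw [qf, qf, hM, map_sub, LinearMap.sub_apply, inner_sub_right, Complex.sub_re]
  rw [hdiff]
  set z := Matrix.toEuclideanLin M x with hz
  have hcoord : ∀ i, z i = ∑ j, M i j * x j := by
    intro i
    simp [hz, Matrix.toEuclideanLin_apply, Matrix.mulVec, dotProduct]
  have hzn : ‖z‖ ≤ (∑ i, ∑ j, ‖M i j‖) * ‖x‖ := by
    calc ‖z‖ ≤ ∑ i, ‖z i‖ := euclidean_norm_le_sum z
    _ ≤ ∑ i, (∑ j, ‖M i j‖) * ‖x‖ := by
        apply Finset.sum_le_sum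
        intro i _
        rw [hcoord i]
        calc ‖∑ j, M i j * x j‖ ≤ ∑ j, ‖M i j * x j‖ :=
              norm_sum_le _ _
        _ ≤ ∑ j, ‖M i j‖ * ‖x‖ := by
            apply Finset.sum_le_sum
            intro j _
            rw [norm_mul]
            exact mul_le_mul_of_nonneg_left (coord_le_norm x j) (norm_nonneg _)
        _ = (∑ j, ‖M i j‖) * ‖x‖ := by rw [Finset.sum_mul]
    _ = (∑ i, ∑ j, ‖M i j‖) * ‖x‖ := by rw [Finset.sum_mul]
  calc |(inner ℂ x z : ℂ).re| ≤ ‖(inner ℂ x z : ℂ)‖ := Complex.abs_re_le_norm _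
  _ = ‖(inner ℂ x z : ℂ)‖ := rfl
  _ ≤ ‖x‖ * ‖z‖ := norm_inner_le_norm x z
  _ ≤ ‖x‖ * ((∑ i, ∑ j, ‖M i j‖) * ‖x‖) := by
      exact mul_le_mul_of_nonneg_left hzn (norm_nonneg x)
  _ = (∑ i, ∑ j, ‖M i j‖) * ‖x‖ ^ 2 := by ring

lemma count_add_count (hB : B.IsHermitian) (ε : ℝ) (hne : ∀ j, hB.eigenvalues j ≠ ε) :
    (univ.filter fun j => hB.eigenvalues j < ε).card
      + (univ.filter fun j => ε < hB.eigenvalues j).card = N := by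
  have h1 : (univ.filter fun j => ε < hB.eigenvalues j)
      = (univ.filter fun j => ¬ hB.eigenvalues j < ε) := by
    apply Finset.filter_congr
    intro j _
    constructor
    · intro h; exact not_lt.mpr (le_of_lt h)
    · intro h; exact lt_of_le_of_ne (not_lt.mp h) (Ne.symm (hne j))
  rw [h1, Finset.card_filter_add_card_filter_not]
  simp

lemma count_lt_eq_of_close (hB : B.IsHermitian) (hC : C.IsHermitian) (ε δ : ℝ)
    (hδ : 0 < δ) (hBgap : ∀ j, δ ≤ |hB.eigenvalues j - ε|)
    (hCne : ∀ j, hC.eigenvalues j ≠ ε)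
    (hclose : ∀ x : EuclideanSpace ℂ (Fin N), x ≠ 0 → |qf C x - qf B x| < δ * ‖x‖ ^ 2) :
    (univ.filter fun j => hC.eigenvalues j < ε).card
      = (univ.filter fun j => hB.eigenvalues j < ε).card := by
  have hBne : ∀ j, hB.eigenvalues j ≠ ε := by
    intro j h
    have := hBgap j
    rw [h, sub_self, abs_zero] at this
    linarith
  have h1 := count_lt_le_of_close hB hC ε δ hδ hBgap hclose
  have h2 := count_gt_le_of_close hB hC ε δ hδ hBgap hclose
  have h3 := count_add_count hB ε hBne
  have h4 := count_add_count hC ε hCne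
  omega

lemma count_const_on_Icc {N : ℕ} (A : ℝ → Matrix (Fin N) (Fin N) ℂ)
    (hA : ∀ s, (A s).IsHermitian) (hcont : Continuous A) (a b : ℝ) (hab : a ≤ b) (ε : ℝ)
    (hne : ∀ s ∈ Set.Icc a b, ∀ j, (hA s).eigenvalues j ≠ ε) :
    (univ.filter fun j => (hA a).eigenvalues j < ε).card
      = (univ.filter fun j => (hA b).eigenvalues j < ε).card := by
  rcases Nat.eq_zero_or_pos N with hN | hN
  · subst hN
    simp [Finset.card_eq_zero, Finset.eq_empty_iff_forall_notMem]
  haveI : PreconnectedSpace (Set.Icc a b) := Subtype.preconnectedSpace isPreconnected_Icc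
  set F : Set.Icc a b → ℕ := fun s =>
    (univ.filter fun j => (hA s).eigenvalues j < ε).card with hF
  have hlc : IsLocallyConstant F := by
    rw [IsLocallyConstant.iff_eventually_eq]
    intro s₀
    -- gap at s₀
    set δ : ℝ := (univ.image fun j => |(hA s₀).eigenvalues j - ε|).min'
      (by simp [Finset.image_nonempty, Finset.univ_nonempty_iff, Fin.pos_iff_nonempty.mp hN]) with hδdef
    have hδpos : 0 < δ := by
      have hmem := Finset.min'_mem (univ.image fun j => |(hA s₀).eigenvalues j - ε|)
        (by simp [Finset.image_nonempty, Finset.univ_nonempty_iff, Fin.pos_iff_nonempty.mp hN])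
      rw [← hδdef] at hmem
      simp only [Finset.mem_image, Finset.mem_univ, true_and] at hmem
      obtain ⟨j, hj⟩ := hmem
      rw [← hj]
      exact abs_pos.mpr (sub_ne_zero.mpr (hne s₀ s₀.2 j))
    have hgapδ : ∀ j, δ ≤ |(hA s₀).eigenvalues j - ε| := by
      intro j
      apply Finset.min'_le
      exact Finset.mem_image_of_mem _ (mem_univ j)
    -- entrywise continuity
    set g : ℝ → ℝ := fun s => ∑ i, ∑ j, ‖(A s - A s₀) i j‖ with hg
    have hgcont : Continuous g := by
      apply continuous_finset_sum
      intro i _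
      apply continuous_finset_sum
      intro j _
      apply continuous_norm.comp
      exact ((continuous_apply j).comp ((continuous_apply i).comp hcont)).sub continuous_const
    have hg0 : g s₀ = 0 := by simp [hg]
    have hev : ∀ᶠ s in nhds (s₀ : ℝ), g s < δ := by
      have := hgcont.continuousAt (x := (s₀ : ℝ))
      rw [ContinuousAt, hg0] at this
      exact this.eventually_lt_const hδpos
    have hev2 : ∀ᶠ s : Set.Icc a b in nhds s₀, g s < δ :=
      (continuous_subtype_val.tendsto s₀).eventually hev
    filter_upwards [hev2] with s hs
    apply count_lt_eq_of_close (hA s₀) (hA s) ε δ hδpos hgapδ (hne s s.2)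
    intro x hx
    have h1 := abs_qf_sub_le (A s₀) (A s) x
    have h2 : (0:ℝ) < ‖x‖ ^ 2 := by
      have := norm_pos_iff.mpr hx
      positivity
    calc |qf (A s) x - qf (A s₀) x| ≤ g s * ‖x‖ ^ 2 := h1
    _ < δ * ‖x‖ ^ 2 := by nlinarith
  exact hlc.apply_eq_of_preconnectedSpace ⟨a, le_refl a, hab⟩ ⟨b, hab, le_refl b⟩

lemma split_count (hB : B.IsHermitian) (ε : ℝ) (hε : 0 < ε) :
    (univ.filter fun j => 0 ≤ hB.eigenvalues j ∧ hB.eigenvalues j < ε).card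
      + (univ.filter fun j => hB.eigenvalues j < 0).card
      = (univ.filter fun j => hB.eigenvalues j < ε).card := by
  rw [← Finset.card_union_of_disjoint]
  · congr 1
    ext j
    simp only [Finset.mem_union, Finset.mem_filter, Finset.mem_univ, true_and]
    constructor
    · rintro (⟨h1, h2⟩ | h1)
      · exact h2
      · linarith
    · intro h
      rcases le_or_gt 0 (hB.eigenvalues j) with h1 | h1
      · exact Or.inl ⟨h1, h⟩
      · exact Or.inr h1
  · rw [Finset.disjoint_left]
    intro j hj1 hj2
    simp only [Finset.mem_filter, Finset.mem_univ, true_and] at hj1 hj2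
    linarith [hj1.1]

lemma eigen_ne_zero_of_isUnit (hB : B.IsHermitian) (h : IsUnit B) (j : Fin N) :
    hB.eigenvalues j ≠ 0 := by
  have hdet : B.det ≠ 0 := ((Matrix.isUnit_iff_isUnit_det B).mp h).ne_zero
  rw [hB.det_eq_prod_eigenvalues] at hdet
  intro hj
  apply hdet
  apply Finset.prod_eq_zero (mem_univ j)
  rw [hj]; simp

lemma fin_telescope : ∀ (m : ℕ) (g : Fin (m+1) → ℤ),
    ∑ i : Fin m, (g i.castSucc - g i.succ) = g 0 - g (Fin.last m) := by
  intro m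
  induction m with
  | zero => intro g; simp [Fin.last]
  | succ m ih =>
    intro g
    rw [Fin.sum_univ_castSucc]
    have h1 : ∀ i : Fin m, (g i.castSucc.castSucc - g i.castSucc.succ)
        = ((g ∘ Fin.castSucc) i.castSucc - (g ∘ Fin.castSucc) i.succ) := by
      intro i
      simp [Fin.succ_castSucc, -Fin.castSucc_succ]
    rw [Finset.sum_congr rfl (fun i _ => h1 i), ih (g ∘ Fin.castSucc)]
    simp [Fin.succ_last]


/-- `η(A₁) - η(A₀) = 2 · SF(Aₜ)`, where the spectral flow is computed via any
partition `t₀ = 0 < … < t_m = 1` with barriers `±εᵢ` avoided by the spectrum of `A s`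
on each subinterval (Phillips' definition of spectral flow). -/
theorem eta_difference_eq_two_spectral_flow (N : ℕ)
    (A : ℝ → Matrix (Fin N) (Fin N) ℂ) (hA : ∀ s, (A s).IsHermitian)
    (hcont : Continuous A) (h0 : IsUnit (A 0)) (h1 : IsUnit (A 1))
    (m : ℕ) (t : Fin (m + 1) → ℝ) (ht : Monotone t)
    (ht0 : t 0 = 0) (ht1 : t (Fin.last m) = 1)
    (ε : Fin m → ℝ) (hε : ∀ i, 0 < ε i)
    (hgap : ∀ i : Fin m, ∀ s ∈ Set.Icc (t i.castSucc) (t i.succ), ∀ j,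
      (hA s).eigenvalues j ≠ ε i ∧ (hA s).eigenvalues j ≠ -(ε i)) :
    matrixSignature (hA 1) - matrixSignature (hA 0)
      = 2 * ∑ i : Fin m,
          (((univ.filter fun j =>
              0 ≤ (hA (t i.succ)).eigenvalues j ∧ (hA (t i.succ)).eigenvalues j < ε i).card : ℤ)
            - ((univ.filter fun j =>
              0 ≤ (hA (t i.castSucc)).eigenvalues j ∧
                (hA (t i.castSucc)).eigenvalues j < ε i).card : ℤ)) := by
  classical
  set n : ℝ → ℕ := fun s => (univ.filter fun j => (hA s).eigenvalues j < 0).card with hn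
  -- per-interval: term i = n (t i.castSucc) - n (t i.succ)
  have hterm : ∀ i : Fin m,
      (((univ.filter fun j =>
          0 ≤ (hA (t i.succ)).eigenvalues j ∧ (hA (t i.succ)).eigenvalues j < ε i).card : ℤ)
        - ((univ.filter fun j =>
          0 ≤ (hA (t i.castSucc)).eigenvalues j ∧
            (hA (t i.castSucc)).eigenvalues j < ε i).card : ℤ))
      = (n (t i.castSucc) : ℤ) - (n (t i.succ) : ℤ) := by
    intro i
    have hle : t i.castSucc ≤ t i.succ := ht (Fin.castSucc_le_succ i)
    have hconst : (univ.filter fun j => (hA (t i.castSucc)).eigenvalues j < ε i).card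
        = (univ.filter fun j => (hA (t i.succ)).eigenvalues j < ε i).card :=
      count_const_on_Icc A hA hcont _ _ hle (ε i) (fun s hs j => (hgap i s hs j).1)
    have hs1 := split_count (hA (t i.succ)) (ε i) (hε i)
    have hs2 := split_count (hA (t i.castSucc)) (ε i) (hε i)
    rw [← hconst] at hs1
    simp only [hn]
    omega
  rw [Finset.sum_congr rfl (fun i _ => hterm i)]
  have htel := fin_telescope m (fun k => (n (t k) : ℤ))
  rw [htel, ht0, ht1]
  -- signature identities
  have hz0 : ∀ j, (hA 0).eigenvalues j ≠ (0:ℝ) := eigen_ne_zero_of_isUnit (hA 0) h0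
  have hz1 : ∀ j, (hA 1).eigenvalues j ≠ (0:ℝ) := eigen_ne_zero_of_isUnit (hA 1) h1
  have hc0 := count_add_count (hA 0) 0 hz0
  have hc1 := count_add_count (hA 1) 0 hz1
  simp only [matrixSignature, hn]
  push_cast
  omega
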